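/- Let d ≥ 1 and let A, B be d×d complex matrices. There exists N such that for all n ≥ N, ‖exp(A/n)·exp(B/n) − exp((A + B)/n)‖ ≤ (1/n²)·‖AB − BA‖, where ‖·‖ is the operator norm on d×d complex matrices. -/

import Mathlib

set_option maxHeartbeats 1000000
set_option linter.unusedSectionVars false
set_option linter.unusedVariables false

open scoped Matrix.Norms.L2Operator

namespace ExpProdAux
open NormedSpace
variable {𝔸 : Type*} [NormedRing 𝔸] [NormedAlgebra ℂ 𝔸] [CompleteSpace 𝔸]

lemma tail_bound' (x : 𝔸) (hx : ‖x‖ ≤ 1/2) :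
    ‖exp x - (1 + x + (2:ℂ)⁻¹ • (x*x))‖ ≤ 2 * ‖x‖^3 := by
  have h := exp_series_hasSum_exp' (𝕂 := ℂ) x
  have h3 : HasSum (fun n : ℕ => ((Nat.factorial (n+3) : ℂ)⁻¹) • x^(n+3))
      (exp x - ∑ i ∈ Finset.range 3, ((Nat.factorial i : ℂ)⁻¹) • x^i) :=
    (hasSum_nat_add_iff' 3).mpr h
  have hS : ∑ i ∈ Finset.range 3, ((Nat.factorial i : ℂ)⁻¹) • x^i
      = 1 + x + (2:ℂ)⁻¹ • (x*x) := by
    simp [Finset.sum_range_succ, Nat.factorial, pow_succ]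
  rw [hS] at h3
  have hx0 : (0:ℝ) ≤ ‖x‖ := norm_nonneg x
  have hf : ∀ n : ℕ, ‖((Nat.factorial (n+3) : ℂ)⁻¹) • x^(n+3)‖ ≤ ‖x‖^3 * (1/2:ℝ)^n := by
    intro n
    rw [norm_smul]
    have h1 : ‖((Nat.factorial (n+3) : ℂ))⁻¹‖ ≤ 1 := by
      rw [norm_inv, Complex.norm_natCast]
      rw [inv_le_one_iff₀]
      right
      exact_mod_cast Nat.one_le_iff_ne_zero.mpr (Nat.factorial_ne_zero _)
    have h2 : ‖x^(n+3)‖ ≤ ‖x‖^3 * (1/2:ℝ)^n := by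
      calc ‖x^(n+3)‖ ≤ ‖x‖^(n+3) := norm_pow_le' x (Nat.succ_pos _)
        _ = ‖x‖^3 * ‖x‖^n := by ring
        _ ≤ ‖x‖^3 * (1/2:ℝ)^n := by
            gcongr
    calc ‖((Nat.factorial (n+3) : ℂ))⁻¹‖ * ‖x^(n+3)‖ ≤ 1 * (‖x‖^3 * (1/2:ℝ)^n) := by
          gcongr
      _ = ‖x‖^3 * (1/2:ℝ)^n := one_mul _
  have hg : Summable (fun n : ℕ => ‖x‖^3 * (1/2:ℝ)^n) :=
    (summable_geometric_two).mul_left _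
  have hnorm : Summable (fun n : ℕ => ‖((Nat.factorial (n+3) : ℂ)⁻¹) • x^(n+3)‖) :=
    Summable.of_nonneg_of_le (fun n => norm_nonneg _) hf hg
  calc ‖exp x - (1 + x + (2:ℂ)⁻¹ • (x*x))‖
      = ‖∑' n : ℕ, ((Nat.factorial (n+3) : ℂ)⁻¹) • x^(n+3)‖ := by rw [h3.tsum_eq]
    _ ≤ ∑' n : ℕ, ‖((Nat.factorial (n+3) : ℂ)⁻¹) • x^(n+3)‖ := norm_tsum_le_tsum_norm hnorm
    _ ≤ ∑' n : ℕ, ‖x‖^3 * (1/2:ℝ)^n := hnorm.tsum_le_tsum hf hg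
    _ = ‖x‖^3 * 2 := by rw [tsum_mul_left, tsum_geometric_two]
    _ = 2 * ‖x‖^3 := by ring

lemma rearrange (a b e p q s w : 𝔸) :
    a * b - e - w
      = (p * (b - q) + (a - p) * q + (a - p) * (b - q)) - (e - s) + (p * q - s - w) := by
  noncomm_ring

lemma T4_eq (x y : 𝔸) :
    (1 + x + (2:ℂ)⁻¹ • (x*x)) * (1 + y + (2:ℂ)⁻¹ • (y*y))
      - (1 + (x+y) + (2:ℂ)⁻¹ • ((x+y)*(x+y))) - (2:ℂ)⁻¹ • (x*y - y*x)
    = (2:ℂ)⁻¹ • (x*(y*y)) + (2:ℂ)⁻¹ • (x*(x*y)) + ((2:ℂ)⁻¹*(2:ℂ)⁻¹) • (x*(x*(y*y))) := by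
  simp only [mul_add, add_mul, mul_one, one_mul, smul_mul_assoc, mul_smul_comm, smul_smul,
    smul_sub, smul_add, mul_assoc]
  match_scalars <;> norm_num

lemma norm_half : ‖(2:ℂ)⁻¹‖ = 1/2 := by
  rw [norm_inv]
  norm_num

lemma norm_smul_half (z : 𝔸) : ‖(2:ℂ)⁻¹ • z‖ = (1/2) * ‖z‖ := by
  rw [norm_smul, norm_half]

lemma Pmul_bound (z E : 𝔸) (hz : ‖z‖ ≤ 1/2) :
    ‖(1 + z + (2:ℂ)⁻¹ • (z*z)) * E‖ ≤ 2 * ‖E‖ := by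
  have expand : (1 + z + (2:ℂ)⁻¹ • (z*z)) * E = E + z * E + (2:ℂ)⁻¹ • ((z*z) * E) := by
    simp only [add_mul, one_mul, smul_mul_assoc]
  rw [expand]
  have hE0 : (0:ℝ) ≤ ‖E‖ := norm_nonneg _
  have hz0 : (0:ℝ) ≤ ‖z‖ := norm_nonneg _
  have b1 : ‖z * E‖ ≤ (1/2) * ‖E‖ := (norm_mul_le _ _).trans (by gcongr)
  have b2 : ‖(2:ℂ)⁻¹ • ((z*z)*E)‖ ≤ (1/2) * ((1/4) * ‖E‖) := by
    rw [norm_smul_half]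
    have : ‖(z*z)*E‖ ≤ (1/4) * ‖E‖ := by
      calc ‖(z*z)*E‖ ≤ ‖z‖ * ‖z‖ * ‖E‖ := by
            refine (norm_mul_le _ _).trans ?_
            gcongr
            exact norm_mul_le _ _
        _ ≤ (1/2) * (1/2) * ‖E‖ := by gcongr
        _ = (1/4) * ‖E‖ := by ring
    linarith
  calc ‖E + z * E + (2:ℂ)⁻¹ • ((z*z)*E)‖
      ≤ ‖E + z * E‖ + ‖(2:ℂ)⁻¹ • ((z*z)*E)‖ := norm_add_le _ _
    _ ≤ (‖E‖ + ‖z * E‖) + ‖(2:ℂ)⁻¹ • ((z*z)*E)‖ := by gcongr; exact norm_add_le _ _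
    _ ≤ (‖E‖ + (1/2) * ‖E‖) + (1/2) * ((1/4) * ‖E‖) := by gcongr
    _ ≤ 2 * ‖E‖ := by linarith

lemma mulP_bound (z E : 𝔸) (hz : ‖z‖ ≤ 1/2) :
    ‖E * (1 + z + (2:ℂ)⁻¹ • (z*z))‖ ≤ 2 * ‖E‖ := by
  have expand : E * (1 + z + (2:ℂ)⁻¹ • (z*z)) = E + E * z + (2:ℂ)⁻¹ • (E * (z*z)) := by
    simp only [mul_add, mul_one, mul_smul_comm]
  rw [expand]
  have hE0 : (0:ℝ) ≤ ‖E‖ := norm_nonneg _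
  have hz0 : (0:ℝ) ≤ ‖z‖ := norm_nonneg _
  have b1 : ‖E * z‖ ≤ ‖E‖ * (1/2) := (norm_mul_le _ _).trans (by gcongr)
  have b2 : ‖(2:ℂ)⁻¹ • (E * (z*z))‖ ≤ (1/2) * (‖E‖ * (1/4)) := by
    rw [norm_smul_half]
    have : ‖E * (z*z)‖ ≤ ‖E‖ * (1/4) := by
      calc ‖E * (z*z)‖ ≤ ‖E‖ * (‖z‖ * ‖z‖) := by
            refine (norm_mul_le _ _).trans ?_
            gcongr
            exact norm_mul_le _ _
        _ ≤ ‖E‖ * ((1/2) * (1/2)) := by gcongr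
        _ = ‖E‖ * (1/4) := by ring
    linarith
  calc ‖E + E * z + (2:ℂ)⁻¹ • (E * (z*z))‖
      ≤ ‖E + E * z‖ + ‖(2:ℂ)⁻¹ • (E * (z*z))‖ := norm_add_le _ _
    _ ≤ (‖E‖ + ‖E * z‖) + ‖(2:ℂ)⁻¹ • (E * (z*z))‖ := by gcongr; exact norm_add_le _ _
    _ ≤ (‖E‖ + ‖E‖ * (1/2)) + (1/2) * (‖E‖ * (1/4)) := by gcongr
    _ ≤ 2 * ‖E‖ := by linarith

lemma T4_bound (x y : 𝔸) (hx : ‖x‖ ≤ 1) (hy : ‖y‖ ≤ 1) :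
    ‖(1 + x + (2:ℂ)⁻¹ • (x*x)) * (1 + y + (2:ℂ)⁻¹ • (y*y))
      - (1 + (x+y) + (2:ℂ)⁻¹ • ((x+y)*(x+y))) - (2:ℂ)⁻¹ • (x*y - y*x)‖
      ≤ 2 * (max ‖x‖ ‖y‖)^3 := by
  rw [T4_eq]
  have hxr : ‖x‖ ≤ max ‖x‖ ‖y‖ := le_max_left _ _
  have hyr : ‖y‖ ≤ max ‖x‖ ‖y‖ := le_max_right _ _
  have hr0 : (0:ℝ) ≤ max ‖x‖ ‖y‖ := le_trans (norm_nonneg x) hxr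
  have hr1 : max ‖x‖ ‖y‖ ≤ 1 := max_le hx hy
  set r := max ‖x‖ ‖y‖
  have m1 : ‖x*(y*y)‖ ≤ r^3 := by
    calc ‖x*(y*y)‖ ≤ ‖x‖ * (‖y‖ * ‖y‖) := by
          refine (norm_mul_le _ _).trans ?_; gcongr; exact norm_mul_le _ _
      _ ≤ r * (r * r) := by gcongr
      _ = r^3 := by ring
  have m2 : ‖x*(x*y)‖ ≤ r^3 := by
    calc ‖x*(x*y)‖ ≤ ‖x‖ * (‖x‖ * ‖y‖) := by
          refine (norm_mul_le _ _).trans ?_; gcongr; exact norm_mul_le _ _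
      _ ≤ r * (r * r) := by gcongr
      _ = r^3 := by ring
  have m3 : ‖x*(x*(y*y))‖ ≤ r^3 := by
    calc ‖x*(x*(y*y))‖ ≤ ‖x‖ * (‖x‖ * (‖y‖ * ‖y‖)) := by
          refine (norm_mul_le _ _).trans ?_
          gcongr
          refine (norm_mul_le _ _).trans ?_
          gcongr
          exact norm_mul_le _ _
      _ ≤ r * (r * (r * r)) := by gcongr
      _ = r^3 * r := by ring
      _ ≤ r^3 * 1 := by nlinarith [pow_nonneg hr0 3]
      _ = r^3 := mul_one _
  have b3 : ‖((2:ℂ)⁻¹*(2:ℂ)⁻¹) • (x*(x*(y*y)))‖ ≤ (1/4) * r^3 := by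
    rw [norm_smul, norm_mul, norm_half]
    nlinarith [norm_nonneg (x*(x*(y*y)))]
  calc ‖(2:ℂ)⁻¹ • (x*(y*y)) + (2:ℂ)⁻¹ • (x*(x*y)) + ((2:ℂ)⁻¹*(2:ℂ)⁻¹) • (x*(x*(y*y)))‖
      ≤ ‖(2:ℂ)⁻¹ • (x*(y*y))‖ + ‖(2:ℂ)⁻¹ • (x*(x*y))‖
        + ‖((2:ℂ)⁻¹*(2:ℂ)⁻¹) • (x*(x*(y*y)))‖ := by
        refine (norm_add_le _ _).trans ?_; gcongr; exact norm_add_le _ _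
    _ ≤ (1/2) * r^3 + (1/2) * r^3 + (1/4) * r^3 := by
        rw [norm_smul_half, norm_smul_half]
        gcongr
    _ ≤ 2 * r^3 := by nlinarith [pow_nonneg hr0 3]

lemma key_bound' (x y : 𝔸) (hx : ‖x‖ ≤ 1/4) (hy : ‖y‖ ≤ 1/4) :
    ‖exp x * exp y - exp (x + y) - (2:ℂ)⁻¹ • (x*y - y*x)‖
      ≤ 30 * (max ‖x‖ ‖y‖)^3 := by
  have hxr : ‖x‖ ≤ max ‖x‖ ‖y‖ := le_max_left _ _
  have hyr : ‖y‖ ≤ max ‖x‖ ‖y‖ := le_max_right _ _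
  have hr0 : (0:ℝ) ≤ max ‖x‖ ‖y‖ := le_trans (norm_nonneg x) hxr
  have hr4 : max ‖x‖ ‖y‖ ≤ 1/4 := max_le hx hy
  have hr1 : max ‖x‖ ‖y‖ ≤ 1 := hr4.trans (by norm_num)
  set r := max ‖x‖ ‖y‖ with hrdef
  have hExn : ‖exp x - (1 + x + (2:ℂ)⁻¹ • (x*x))‖ ≤ 2 * r^3 :=
    (tail_bound' x (hx.trans (by norm_num))).trans (by gcongr)
  have hEyn : ‖exp y - (1 + y + (2:ℂ)⁻¹ • (y*y))‖ ≤ 2 * r^3 :=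
    (tail_bound' y (hy.trans (by norm_num))).trans (by gcongr)
  have hEzn : ‖exp (x+y) - (1 + (x+y) + (2:ℂ)⁻¹ • ((x+y)*(x+y)))‖ ≤ 16 * r^3 := by
    have h1 : ‖x + y‖ ≤ 2 * r := by
      calc ‖x + y‖ ≤ ‖x‖ + ‖y‖ := norm_add_le _ _
        _ ≤ 2 * r := by linarith
    refine (tail_bound' (x+y) (h1.trans (by linarith))).trans ?_
    calc 2 * ‖x+y‖^3 ≤ 2 * (2*r)^3 := by gcongr
      _ = 16 * r^3 := by ring
  rw [rearrange (exp x) (exp y) (exp (x+y)) (1 + x + (2:ℂ)⁻¹ • (x*x))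
    (1 + y + (2:ℂ)⁻¹ • (y*y)) (1 + (x+y) + (2:ℂ)⁻¹ • ((x+y)*(x+y))) ((2:ℂ)⁻¹ • (x*y - y*x))]
  have b1 : ‖(1 + x + (2:ℂ)⁻¹ • (x*x)) * (exp y - (1 + y + (2:ℂ)⁻¹ • (y*y)))‖
      ≤ 2 * (2 * r^3) := by
    refine (Pmul_bound x _ (hx.trans (by norm_num))).trans ?_
    gcongr
  have b2 : ‖(exp x - (1 + x + (2:ℂ)⁻¹ • (x*x))) * (1 + y + (2:ℂ)⁻¹ • (y*y))‖
      ≤ 2 * (2 * r^3) := by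
    refine (mulP_bound y _ (hy.trans (by norm_num))).trans ?_
    gcongr
  have b3 : ‖(exp x - (1 + x + (2:ℂ)⁻¹ • (x*x))) * (exp y - (1 + y + (2:ℂ)⁻¹ • (y*y)))‖
      ≤ (2 * r^3) * (2 * r^3) :=
    (norm_mul_le _ _).trans (mul_le_mul hExn hEyn (norm_nonneg _) (by positivity))
  have b4 := T4_bound x y (hx.trans (by norm_num)) (hy.trans (by norm_num))
  rw [← hrdef] at b4
  have hr3 : r^3 ≤ 1 := pow_le_one₀ hr0 hr1
  calc ‖((1 + x + (2:ℂ)⁻¹ • (x*x)) * (exp y - (1 + y + (2:ℂ)⁻¹ • (y*y)))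
          + (exp x - (1 + x + (2:ℂ)⁻¹ • (x*x))) * (1 + y + (2:ℂ)⁻¹ • (y*y))
          + (exp x - (1 + x + (2:ℂ)⁻¹ • (x*x))) * (exp y - (1 + y + (2:ℂ)⁻¹ • (y*y))))
        - (exp (x+y) - (1 + (x+y) + (2:ℂ)⁻¹ • ((x+y)*(x+y))))
        + ((1 + x + (2:ℂ)⁻¹ • (x*x)) * (1 + y + (2:ℂ)⁻¹ • (y*y))
          - (1 + (x+y) + (2:ℂ)⁻¹ • ((x+y)*(x+y))) - (2:ℂ)⁻¹ • (x*y - y*x))‖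
      ≤ ((‖(1 + x + (2:ℂ)⁻¹ • (x*x)) * (exp y - (1 + y + (2:ℂ)⁻¹ • (y*y)))‖
          + ‖(exp x - (1 + x + (2:ℂ)⁻¹ • (x*x))) * (1 + y + (2:ℂ)⁻¹ • (y*y))‖
          + ‖(exp x - (1 + x + (2:ℂ)⁻¹ • (x*x))) * (exp y - (1 + y + (2:ℂ)⁻¹ • (y*y)))‖)
        + ‖exp (x+y) - (1 + (x+y) + (2:ℂ)⁻¹ • ((x+y)*(x+y)))‖)
        + ‖(1 + x + (2:ℂ)⁻¹ • (x*x)) * (1 + y + (2:ℂ)⁻¹ • (y*y))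
          - (1 + (x+y) + (2:ℂ)⁻¹ • ((x+y)*(x+y))) - (2:ℂ)⁻¹ • (x*y - y*x)‖ := by
        refine (norm_add_le _ _).trans ?_
        gcongr
        refine (norm_sub_le _ _).trans ?_
        gcongr
        refine (norm_add_le _ _).trans ?_
        gcongr
        exact norm_add_le _ _
    _ ≤ ((2 * (2 * r^3) + 2 * (2 * r^3) + (2 * r^3) * (2 * r^3)) + 16 * r^3) + 2 * r^3 := by
        gcongr
    _ ≤ 30 * r^3 := by nlinarith [pow_nonneg hr0 3]

end ExpProdAux

open ExpProdAux NormedSpace in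
/-- There exists `N` such that for all `n ≥ N`,
`‖exp(A/n)·exp(B/n) − exp((A + B)/n)‖ ≤ (1/n²)·‖AB − BA‖` in the operator norm. -/
theorem norm_exp_prod_sub_exp_sum_le {d : ℕ} (hd : 1 ≤ d)
    (A B : Matrix (Fin d) (Fin d) ℂ) :
    ∃ N : ℕ, ∀ n : ℕ, N ≤ n →
      ‖NormedSpace.exp ((n : ℂ)⁻¹ • A) * NormedSpace.exp ((n : ℂ)⁻¹ • B) -
          NormedSpace.exp ((n : ℂ)⁻¹ • (A + B))‖ ≤
        (1 / (n : ℝ) ^ 2) * ‖A * B - B * A‖ := by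
  by_cases hAB : A * B = B * A
  · refine ⟨1, fun n hn => ?_⟩
    have hC0 : Commute A B := hAB
    have hC : Commute ((n:ℂ)⁻¹ • A) ((n:ℂ)⁻¹ • B) := (hC0.smul_left _).smul_right _
    have he : exp ((n:ℂ)⁻¹ • (A + B))
        = exp ((n:ℂ)⁻¹ • A) * exp ((n:ℂ)⁻¹ • B) := by
      rw [smul_add]
      exact Matrix.exp_add_of_commute _ _ hC
    rw [he, sub_self, norm_zero]
    positivity
  · have hcpos : 0 < ‖A * B - B * A‖ := by
      rw [norm_pos_iff]
      exact sub_ne_zero_of_ne hAB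
    set m : ℝ := max ‖A‖ ‖B‖ with hm
    have hm0 : (0:ℝ) ≤ m := le_trans (norm_nonneg A) (le_max_left _ _)
    refine ⟨max (⌈4*m⌉₊ + 1) (⌈60*m^3/‖A * B - B * A‖⌉₊ + 1), fun n hn => ?_⟩
    have hn1 : (⌈4*m⌉₊ + 1 : ℕ) ≤ n := le_trans (le_max_left _ _) hn
    have hn2 : (⌈60*m^3/‖A * B - B * A‖⌉₊ + 1 : ℕ) ≤ n := le_trans (le_max_right _ _) hn
    have hnR : (0:ℝ) < n := by
      have : (1:ℕ) ≤ n := le_trans (Nat.le_add_left 1 _) hn1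
      exact_mod_cast Nat.lt_of_lt_of_le Nat.zero_lt_one this
    have h4m : 4*m + 1 ≤ (n:ℝ) := by
      have := Nat.le_ceil (4*m)
      have h2 : ((⌈4*m⌉₊ + 1 : ℕ) : ℝ) ≤ (n:ℝ) := by exact_mod_cast hn1
      push_cast at h2
      linarith
    have h60 : 60*m^3/‖A * B - B * A‖ ≤ (n:ℝ) := by
      have := Nat.le_ceil (60*m^3/‖A * B - B * A‖)
      have h2 : ((⌈60*m^3/‖A * B - B * A‖⌉₊ + 1 : ℕ) : ℝ) ≤ (n:ℝ) := by exact_mod_cast hn2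
      push_cast at h2
      linarith
    have hnormx : ‖(n:ℂ)⁻¹ • A‖ = ‖A‖ / n := by
      rw [norm_smul, norm_inv, Complex.norm_natCast]
      ring
    have hnormy : ‖(n:ℂ)⁻¹ • B‖ = ‖B‖ / n := by
      rw [norm_smul, norm_inv, Complex.norm_natCast]
      ring
    have hAm : ‖A‖ / (n:ℝ) ≤ m / n := by gcongr; exact le_max_left _ _
    have hBm : ‖B‖ / (n:ℝ) ≤ m / n := by gcongr; exact le_max_right _ _
    have hmn : m / (n:ℝ) ≤ 1/4 := by
      rw [div_le_iff₀ hnR]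
      linarith
    have hx : ‖(n:ℂ)⁻¹ • A‖ ≤ 1/4 := by rw [hnormx]; exact hAm.trans hmn
    have hy : ‖(n:ℂ)⁻¹ • B‖ ≤ 1/4 := by rw [hnormy]; exact hBm.trans hmn
    have key := key_bound' ((n:ℂ)⁻¹ • A) ((n:ℂ)⁻¹ • B) hx hy
    have hmax : max ‖(n:ℂ)⁻¹ • A‖ ‖(n:ℂ)⁻¹ • B‖ ≤ m / n := by
      rw [hnormx, hnormy]
      exact max_le hAm hBm
    have hmax0 : (0:ℝ) ≤ max ‖(n:ℂ)⁻¹ • A‖ ‖(n:ℂ)⁻¹ • B‖ :=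
      le_trans (norm_nonneg _) (le_max_left _ _)
    have key2 : ‖exp ((n:ℂ)⁻¹ • A) * exp ((n:ℂ)⁻¹ • B)
        - exp ((n:ℂ)⁻¹ • A + (n:ℂ)⁻¹ • B)
        - (2:ℂ)⁻¹ • (((n:ℂ)⁻¹ • A)*((n:ℂ)⁻¹ • B) - ((n:ℂ)⁻¹ • B)*((n:ℂ)⁻¹ • A))‖
        ≤ 30 * (m/n)^3 := by
      refine key.trans ?_
      gcongr
    have hxy : ((n:ℂ)⁻¹ • A)*((n:ℂ)⁻¹ • B) - ((n:ℂ)⁻¹ • B)*((n:ℂ)⁻¹ • A)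
        = ((n:ℂ)⁻¹*(n:ℂ)⁻¹) • (A * B - B * A) := by
      rw [smul_mul_smul_comm, smul_mul_smul_comm, smul_sub]
    have hw : ‖(2:ℂ)⁻¹ • (((n:ℂ)⁻¹ • A)*((n:ℂ)⁻¹ • B) - ((n:ℂ)⁻¹ • B)*((n:ℂ)⁻¹ • A))‖
        = (1/2) * ((1/(n:ℝ)^2) * ‖A * B - B * A‖) := by
      rw [hxy, norm_smul, norm_smul]
      simp only [norm_inv, norm_mul, Complex.norm_natCast, Complex.norm_ofNat]
      ring
    have harith : 30 * (m/n)^3 ≤ (1/2) * ((1/(n:ℝ)^2) * ‖A * B - B * A‖) := by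
      have h60' : 60*m^3 ≤ (n:ℝ) * ‖A * B - B * A‖ := (div_le_iff₀ hcpos).mp h60
      have e1 : 30 * (m/(n:ℝ))^3 = (60*m^3) / (2*(n:ℝ)^3) := by
        field_simp
        ring
      have e2 : (1/2) * ((1/(n:ℝ)^2) * ‖A * B - B * A‖) = ((n:ℝ) * ‖A * B - B * A‖) / (2*(n:ℝ)^3) := by
        field_simp
      rw [e1, e2]
      gcongr
    rw [smul_add]
    calc ‖exp ((n:ℂ)⁻¹ • A) * exp ((n:ℂ)⁻¹ • B) - exp ((n:ℂ)⁻¹ • A + (n:ℂ)⁻¹ • B)‖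
        = ‖(exp ((n:ℂ)⁻¹ • A) * exp ((n:ℂ)⁻¹ • B) - exp ((n:ℂ)⁻¹ • A + (n:ℂ)⁻¹ • B)
            - (2:ℂ)⁻¹ • (((n:ℂ)⁻¹ • A)*((n:ℂ)⁻¹ • B) - ((n:ℂ)⁻¹ • B)*((n:ℂ)⁻¹ • A)))
          + (2:ℂ)⁻¹ • (((n:ℂ)⁻¹ • A)*((n:ℂ)⁻¹ • B) - ((n:ℂ)⁻¹ • B)*((n:ℂ)⁻¹ • A))‖ := by
          rw [sub_add_cancel]
      _ ≤ ‖exp ((n:ℂ)⁻¹ • A) * exp ((n:ℂ)⁻¹ • B) - exp ((n:ℂ)⁻¹ • A + (n:ℂ)⁻¹ • B)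
            - (2:ℂ)⁻¹ • (((n:ℂ)⁻¹ • A)*((n:ℂ)⁻¹ • B) - ((n:ℂ)⁻¹ • B)*((n:ℂ)⁻¹ • A))‖
          + ‖(2:ℂ)⁻¹ • (((n:ℂ)⁻¹ • A)*((n:ℂ)⁻¹ • B) - ((n:ℂ)⁻¹ • B)*((n:ℂ)⁻¹ • A))‖ :=
          norm_add_le _ _
      _ ≤ 30 * (m/n)^3 + (1/2) * ((1/(n:ℝ)^2) * ‖A * B - B * A‖) := by
          rw [hw]
          gcongr
      _ ≤ (1/2) * ((1/(n:ℝ)^2) * ‖A * B - B * A‖)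
          + (1/2) * ((1/(n:ℝ)^2) * ‖A * B - B * A‖) := by gcongr
      _ = (1 / (n:ℝ)^2) * ‖A * B - B * A‖ := by ring
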